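/- The covariant set-theoretical entropy ent_set(σ_{φ,𝔴}) = 𝗈(σ_{φ,𝔴}) equals 0 if there exist m > n ≥ 1 with σ_{φ,𝔴}^n = σ_{φ,𝔴}^m, and equals +∞ otherwise. In particular, ent_set(σ_{φ,𝔴}) ∈ {0, +∞}, and ent_set(σ_{φ,𝔴}) = 0 if and only if σ_{φ,𝔴} is quasi-periodic. -/

import Mathlib

set_option maxHeartbeats 1000000

open Function Set

/-- The weighted generalized shift `σ_{φ,𝔴} : F^Γ → F^Γ`,
`σ_{φ,𝔴}((x_α)_α) = (𝔴_α x_{φ(α)})_α`. The unweighted shift `σ_φ` is `wshift φ 1`. -/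
def wshift {F : Type*} [Field F] {Γ : Type*} (φ : Γ → Γ) (w : Γ → F) :
    (Γ → F) → (Γ → F) :=
  fun x α => w α * x (φ α)
/-- An `f`-orbit: a sequence with `f (a n) = a (n+1)` for all `n`. -/
def IsOrbit {A : Type*} (f : A → A) (a : ℕ → A) : Prop := ∀ n : ℕ, f (a n) = a (n + 1)

/-- There exist `m` injective `f`-orbits with pairwise disjoint ranges. -/
def HasDisjointOrbits {A : Type*} (f : A → A) (m : ℕ) : Prop :=
  ∃ a : Fin m → ℕ → A, (∀ i, IsOrbit f (a i) ∧ Function.Injective (a i)) ∧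
    ∀ i j, i ≠ j → Disjoint (Set.range (a i)) (Set.range (a j))

/-- The infinite orbit number `𝗈(f) ∈ ℕ ∪ {+∞}`. -/
noncomputable def orbitNumber {A : Type*} (f : A → A) : ℕ∞ :=
  sSup ({0} ∪ {m : ℕ∞ | ∃ k : ℕ, m = (k : ℕ∞) ∧ 1 ≤ k ∧ HasDisjointOrbits f k})

/-- Covariant set-theoretical entropy: `ent_set f = 𝗈(f)`. -/
noncomputable def entSet {A : Type*} (f : A → A) : ℕ∞ := orbitNumber f

open Polynomial

section Aux

variable {F : Type*} [Field F] {Γ : Type*}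

/-- Bundled linear version of `wshift`. -/
def shiftL (φ : Γ → Γ) (w : Γ → F) : (Γ → F) →ₗ[F] (Γ → F) where
  toFun := wshift φ w
  map_add' x y := funext fun α => by simp [wshift, mul_add]
  map_smul' c x := funext fun α => by
    simp only [wshift, Pi.smul_apply, smul_eq_mul, RingHom.id_apply]
    ring

lemma shiftL_coe (φ : Γ → Γ) (w : Γ → F) : ⇑(shiftL φ w) = wshift φ w := rfl

/-- Test polynomial `X^n + X^(n+d)`. -/
noncomputable def Qp (F : Type*) [Field F] (n d : ℕ) : F[X] := X ^ n + X ^ (n + d)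

lemma Qp_coeff (n d k : ℕ) :
    (Qp F n d).coeff k = (if k = n then (1 : F) else 0) + (if k = n + d then 1 else 0) := by
  simp [Qp, coeff_X_pow]

lemma Qp_inj {n d m e : ℕ} (hd : 1 ≤ d) (he : 1 ≤ e) (h : Qp F n d = Qp F m e) :
    n = m ∧ d = e := by
  have hk : ∀ k, ((if k = n then (1 : F) else 0) + (if k = n + d then 1 else 0)) =
      ((if k = m then (1 : F) else 0) + (if k = m + e then 1 else 0)) := by
    intro k; rw [← Qp_coeff, ← Qp_coeff, h]
  have hnm : n = m := by
    by_contra hne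
    rcases Nat.lt_or_ge n m with hlt | hge
    · have h1 := hk n
      simp [show ¬(n = n + d) from by omega, show ¬(n = m) from by omega,
        show ¬(n = m + e) from by omega, show d ≠ 0 from by omega] at h1
    · have h1 := hk m
      simp [show ¬(m = n) from by omega, show ¬(m = n + d) from by omega,
        show ¬(m = m + e) from by omega, show e ≠ 0 from by omega] at h1
  subst hnm
  refine ⟨rfl, ?_⟩
  by_contra hne
  rcases Nat.lt_or_ge d e with hlt | hge
  · have h1 := hk (n + d)
    simp [show ¬(n + d = n) from by omega, show ¬(n + d = n + e) from by omega] at h1; omega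
  · have h1 := hk (n + e)
    simp [show ¬(n + e = n) from by omega, show ¬(n + e = n + d) from by omega] at h1; omega

lemma Qp_ne {n d m e : ℕ} (hd : 1 ≤ d) (he : 1 ≤ e) (hne : ¬(n = m ∧ d = e)) :
    Qp F n d ≠ Qp F m e := fun h => hne (Qp_inj hd he h)

/-- Construction of `k` disjoint injective orbits from a "transcendental" point. -/
lemma hasDisjointOrbits_of_indep (L : (Γ → F) →ₗ[F] (Γ → F)) (x : Γ → F)
    (hx : ∀ p : F[X], aeval L p x = 0 → p = 0) (k : ℕ) :
    HasDisjointOrbits ⇑L k := by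
  refine ⟨fun i n => aeval L (Qp F n (i.1 + 1)) x, fun i => ⟨?_, ?_⟩, ?_⟩
  · intro n
    have h1 : L (aeval L (Qp F n (i.1 + 1)) x) = aeval L (X * Qp F n (i.1 + 1)) x := by
      rw [map_mul, aeval_X, Module.End.mul_apply]
    have h2 : (X : F[X]) * Qp F n (i.1 + 1) = Qp F (n + 1) (i.1 + 1) := by
      simp only [Qp]; ring
    rw [h1, h2]
  · intro n m hnm
    have hnm' : aeval L (Qp F n (i.1 + 1)) x = aeval L (Qp F m (i.1 + 1)) x := hnm
    have h0 : aeval L (Qp F n (i.1 + 1) - Qp F m (i.1 + 1)) x = 0 := by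
      rw [map_sub, LinearMap.sub_apply, hnm', sub_self]
    have heq : Qp F n (i.1 + 1) = Qp F m (i.1 + 1) := sub_eq_zero.mp (hx _ h0)
    exact (Qp_inj (by omega) (by omega) heq).1
  · intro i j hij
    rw [Set.disjoint_left]
    rintro a ⟨n, rfl⟩ ⟨m, hm⟩
    have hm' : aeval L (Qp F m (j.1 + 1)) x = aeval L (Qp F n (i.1 + 1)) x := hm
    have h0 : aeval L (Qp F m (j.1 + 1) - Qp F n (i.1 + 1)) x = 0 := by
      rw [map_sub, LinearMap.sub_apply, hm', sub_self]
    have heq := sub_eq_zero.mp (hx _ h0)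
    have := (Qp_inj (by omega) (by omega) heq).2
    exact hij (Fin.ext (by omega)).symm

end Aux

section Hard

variable {F : Type*} [Field F] [Fintype F] {Γ : Type*}

lemma iterate_linear_sub (L : (Γ → F) →ₗ[F] (Γ → F)) (s : ℕ) (a b : Γ → F) :
    (⇑L)^[s] (a - b) = (⇑L)^[s] a - (⇑L)^[s] b := by
  rw [← Module.End.pow_apply, ← Module.End.pow_apply, ← Module.End.pow_apply, map_sub]

lemma iterate_eq_aeval_pow (L : (Γ → F) →ₗ[F] (Γ → F)) (s : ℕ) (a : Γ → F) :
    (⇑L)^[s] a = aeval L ((X : F[X]) ^ s) a := by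
  rw [aeval_X_pow, Module.End.pow_apply]

/-- If the weighted shift is not quasi-periodic, there is a point with
"linearly independent forward orbit". -/
lemma exists_indep (φ : Γ → Γ) (w : Γ → F)
    (h : ¬ ∃ m n : ℕ, 1 ≤ n ∧ n < m ∧ (wshift φ w)^[n] = (wshift φ w)^[m]) :
    ∃ x : Γ → F, ∀ p : F[X], aeval (shiftL φ w) p x = 0 → p = 0 := by
  by_contra hcon
  push_neg at hcon
  set L := shiftL φ w with hL
  set f := wshift φ w with hf
  have hfL : f = ⇑L := rfl
  -- topology
  letI : TopologicalSpace F := ⊥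
  haveI : DiscreteTopology F := ⟨rfl⟩
  haveI : ContinuousAdd F := ⟨continuous_of_discreteTopology⟩
  haveI : ContinuousNeg F := ⟨continuous_of_discreteTopology⟩
  haveI : IsTopologicalAddGroup F := ⟨⟩
  haveI : Countable (Polynomial F) := by
    haveI : Countable (AddMonoidAlgebra F ℕ) := Function.Injective.countable
      (f := fun p : AddMonoidAlgebra F ℕ => p.coeff) (fun p q h => by simpa using h)
    exact Function.Injective.countable (f := fun p : F[X] => p.toFinsupp)
      (fun p q hpq => by cases p; cases q; simpa using hpq)
  have hfcont : Continuous f := by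
    refine continuous_pi fun α => ?_
    exact Continuous.comp (continuous_of_discreteTopology (f := fun t => w α * t))
      (continuous_apply (φ α))
  have hsmulcont : ∀ (c : F) (g : (Γ → F) → (Γ → F)), Continuous g →
      Continuous (fun x => c • g x) := by
    intro c g hg
    refine continuous_pi fun α => ?_
    exact Continuous.comp (continuous_of_discreteTopology (f := fun t => c • t))
      ((continuous_apply α).comp hg)
  have hcont : ∀ p : F[X], Continuous (fun x => aeval L p x) := by
    intro p
    have hrw : (fun x => aeval L p x) =
        fun x => ∑ i ∈ Finset.range (p.natDegree + 1), p.coeff i • (⇑L)^[i] x := by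
      funext x
      rw [aeval_eq_sum_range, LinearMap.sum_apply]
      refine Finset.sum_congr rfl fun i _ => ?_
      rw [LinearMap.smul_apply, Module.End.pow_apply]
    rw [hrw]
    exact continuous_finset_sum _ fun i _ =>
      hsmulcont _ _ ((by rw [← hfL]; exact hfcont : Continuous (⇑L)).iterate i)
  -- Baire category
  obtain ⟨q0, hq0⟩ : ∃ q : {p : F[X] // p ≠ 0},
      (interior {x : Γ → F | aeval L q.1 x = 0}).Nonempty := by
    refine nonempty_interior_of_iUnion_of_closed (fun q => ?_) ?_
    · exact isClosed_singleton.preimage (hcont q.1)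
    · ext x
      simp only [Set.mem_iUnion, Set.mem_univ, iff_true, Set.mem_setOf_eq]
      obtain ⟨p, hp0, hpne⟩ := hcon x
      exact ⟨⟨p, hpne⟩, hp0⟩
  -- normalize to a monic polynomial
  obtain ⟨q1, hq1monic, hq1z⟩ : ∃ q1 : F[X], q1.Monic ∧
      ∀ x : Γ → F, aeval L q0.1 x = 0 → aeval L q1 x = 0 := by
    refine ⟨q0.1 * C (q0.1.leadingCoeff)⁻¹, monic_mul_leadingCoeff_inv q0.2, fun x hx => ?_⟩
    have h1 : aeval L (q0.1 * C (q0.1.leadingCoeff)⁻¹) x =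
        aeval L q0.1 (aeval L (C (q0.1.leadingCoeff)⁻¹) x) := by
      rw [map_mul, Module.End.mul_apply]
    have h2 : (aeval L (C (q0.1.leadingCoeff)⁻¹)) x = (q0.1.leadingCoeff)⁻¹ • x := by
      rw [aeval_C]; rfl
    rw [h1, h2, map_smul, hx, smul_zero]
  set W : Submodule F (Γ → F) := LinearMap.ker (aeval L q1) with hWdef
  have hWsub : {x : Γ → F | aeval L q0.1 x = 0} ⊆ (W : Set (Γ → F)) := fun x hx => hq1z x hx
  have hWint : (interior (W : Set (Γ → F))).Nonempty :=
    hq0.mono (interior_mono hWsub)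
  -- W is open
  have hWopen : IsOpen (W : Set (Γ → F)) := by
    obtain ⟨y, hy⟩ := hWint
    exact AddSubgroup.isOpen_of_mem_nhds W.toAddSubgroup
      (mem_interior_iff_mem_nhds.mp hy)
  -- W is invariant
  have hWinvf : ∀ v ∈ W, f v ∈ W := by
    intro v hv
    have hv' : aeval L q1 v = 0 := hv
    have : aeval L q1 (L v) = aeval L (q1 * X) v := by
      rw [map_mul, aeval_X, Module.End.mul_apply]
    have h2 : aeval L (q1 * X) v = L (aeval L q1 v) := by
      rw [mul_comm, map_mul, aeval_X, Module.End.mul_apply]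
    show aeval L q1 (L v) = 0
    rw [this, h2, hv', map_zero]
  have hWinv : ∀ (s : ℕ), ∀ v ∈ W, f^[s] v ∈ W := by
    intro s
    induction s with
    | zero => intro v hv; simpa using hv
    | succ s ih =>
      intro v hv
      rw [Function.iterate_succ_apply']
      exact hWinvf _ (ih v hv)
  -- compactness: finitely many cosets of W cover
  haveI : CompactSpace (Γ → F) := by infer_instance
  obtain ⟨t, ht⟩ := isCompact_univ.elim_finite_subcover
    (fun x : Γ → F => (fun y => x + y) '' (W : Set (Γ → F)))
    (fun x => (Homeomorph.addLeft x).isOpenMap _ hWopen)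
    (fun x _ => Set.mem_iUnion.mpr ⟨x, ⟨0, W.zero_mem, by simp⟩⟩)
  have hrep : ∀ y : Γ → F, ∃ x, x ∈ t ∧ ∃ u ∈ W, y = x + u := by
    intro y
    obtain ⟨x, hx, hy⟩ := Set.mem_iUnion₂.mp (ht (Set.mem_univ y))
    obtain ⟨u, hu, huy⟩ := hy
    exact ⟨x, hx, u, hu, huy.symm⟩
  choose rr hrrt uu huuW hdecomp using hrep
  -- pigeonhole 1 : the induced map on cosets repeats
  obtain ⟨n0, m0, hne0, hgeq⟩ := Finite.exists_ne_map_eq_of_infinite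
    (fun n : ℕ => fun i : {x // x ∈ t} => (⟨rr (f^[n + 1] i.1), hrrt _⟩ : {x // x ∈ t}))
  have key1full : ∀ (n1 m1 : ℕ),
      (∀ i : {x // x ∈ t}, rr (f^[n1] i.1) = rr (f^[m1] i.1)) →
      ∀ x : Γ → F, f^[n1] x - f^[m1] x ∈ W := by
    intro n1 m1 hg x
    have hx : x = rr x + uu x := hdecomp x
    have hfn : f^[n1] x = f^[n1] (rr x) + f^[n1] (uu x) := by
      conv_lhs => rw [hx]
      rw [hfL, ← Module.End.pow_apply, ← Module.End.pow_apply, ← Module.End.pow_apply, map_add]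
    have hfm : f^[m1] x = f^[m1] (rr x) + f^[m1] (uu x) := by
      conv_lhs => rw [hx]
      rw [hfL, ← Module.End.pow_apply, ← Module.End.pow_apply, ← Module.End.pow_apply, map_add]
    have hgr : rr (f^[n1] (rr x)) = rr (f^[m1] (rr x)) := hg ⟨rr x, hrrt x⟩
    have hd1 : f^[n1] (rr x) = rr (f^[n1] (rr x)) + uu (f^[n1] (rr x)) := hdecomp _
    have hd2 : f^[m1] (rr x) = rr (f^[m1] (rr x)) + uu (f^[m1] (rr x)) := hdecomp _
    have hAB : f^[n1] (rr x) - f^[m1] (rr x) =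
        uu (f^[n1] (rr x)) - uu (f^[m1] (rr x)) := by
      conv_lhs => rw [hd1, hd2]
      rw [hgr]; abel
    have hsum : f^[n1] x - f^[m1] x =
        (uu (f^[n1] (rr x)) - uu (f^[m1] (rr x))) + (f^[n1] (uu x) - f^[m1] (uu x)) := by
      rw [hfn, hfm]
      linear_combination hAB
    rw [hsum]
    exact W.add_mem (W.sub_mem (huuW _) (huuW _))
      (W.sub_mem (hWinv _ _ (huuW x)) (hWinv _ _ (huuW x)))
  -- get n1 < m1 with 1 ≤ n1
  obtain ⟨n1, m1, hn1, hn1m1, key1⟩ : ∃ n1 m1 : ℕ, 1 ≤ n1 ∧ n1 < m1 ∧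
      ∀ x : Γ → F, f^[n1] x - f^[m1] x ∈ W := by
    rcases Nat.lt_or_ge n0 m0 with hlt | hge
    · exact ⟨n0 + 1, m0 + 1, by omega, by omega,
        key1full _ _ (fun i => congrArg Subtype.val (congrFun hgeq i))⟩
    · have hlt : m0 < n0 := by omega
      exact ⟨m0 + 1, n0 + 1, by omega, by omega,
        key1full _ _ (fun i => congrArg Subtype.val (congrFun hgeq.symm i))⟩
  -- pigeonhole 2 : powers of X mod q1 repeat
  obtain ⟨n0', m0', hne0', hgeq'⟩ := Finite.exists_ne_map_eq_of_infinite
    (fun s : ℕ => fun i : Fin (q1.natDegree) => ((X : F[X]) ^ (s + 1) %ₘ q1).coeff i.1)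
  have hmodeq : ∀ (a b : ℕ),
      (∀ i : Fin (q1.natDegree), ((X : F[X]) ^ a %ₘ q1).coeff i.1 =
        ((X : F[X]) ^ b %ₘ q1).coeff i.1) →
      (X : F[X]) ^ a %ₘ q1 = (X : F[X]) ^ b %ₘ q1 := by
    intro a b hcoeff
    ext i
    rcases Nat.lt_or_ge i q1.natDegree with hi | hi
    · exact hcoeff ⟨i, hi⟩
    · have hda := degree_modByMonic_lt ((X : F[X]) ^ a) hq1monic
      have hdb := degree_modByMonic_lt ((X : F[X]) ^ b) hq1monic
      have hq1deg : q1.degree = (q1.natDegree : WithBot ℕ) :=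
        degree_eq_natDegree hq1monic.ne_zero
      rw [coeff_eq_zero_of_degree_lt, coeff_eq_zero_of_degree_lt]
      · exact lt_of_lt_of_le (hdb.trans_eq hq1deg) (by exact_mod_cast hi)
      · exact lt_of_lt_of_le (hda.trans_eq hq1deg) (by exact_mod_cast hi)
  have key2full : ∀ (n2 m2 : ℕ), (X : F[X]) ^ n2 %ₘ q1 = (X : F[X]) ^ m2 %ₘ q1 →
      ∀ v ∈ W, f^[n2] v = f^[m2] v := by
    intro n2 m2 hmod v hv
    have hv' : aeval L q1 v = 0 := hv
    have hpoly : (X : F[X]) ^ n2 - (X : F[X]) ^ m2 =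
        ((X : F[X]) ^ n2 /ₘ q1 - (X : F[X]) ^ m2 /ₘ q1) * q1 := by
      have h1 := modByMonic_add_div ((X : F[X]) ^ n2) q1
      have h2 := modByMonic_add_div ((X : F[X]) ^ m2) q1
      calc (X : F[X]) ^ n2 - (X : F[X]) ^ m2
          = ((X : F[X]) ^ n2 %ₘ q1 + q1 * ((X : F[X]) ^ n2 /ₘ q1)) -
            ((X : F[X]) ^ m2 %ₘ q1 + q1 * ((X : F[X]) ^ m2 /ₘ q1)) := by rw [h1, h2]
        _ = ((X : F[X]) ^ n2 /ₘ q1 - (X : F[X]) ^ m2 /ₘ q1) * q1 := by rw [hmod]; ring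
    have hz0 : aeval L ((X : F[X]) ^ n2 - (X : F[X]) ^ m2) v = 0 := by
      rw [hpoly, map_mul, Module.End.mul_apply, hv', map_zero]
    have hsub : aeval L ((X : F[X]) ^ n2) v - aeval L ((X : F[X]) ^ m2) v = 0 := by
      rw [← LinearMap.sub_apply, ← map_sub, hz0]
    rw [hfL, iterate_eq_aeval_pow L n2 v, iterate_eq_aeval_pow L m2 v]
    exact sub_eq_zero.mp hsub
  obtain ⟨n2, m2, hn2, hn2m2, key2⟩ : ∃ n2 m2 : ℕ, 1 ≤ n2 ∧ n2 < m2 ∧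
      ∀ v ∈ W, f^[n2] v = f^[m2] v := by
    rcases Nat.lt_or_ge n0' m0' with hlt | hge
    · exact ⟨n0' + 1, m0' + 1, by omega, by omega,
        key2full _ _ (hmodeq _ _ (fun i => congrFun hgeq' i)) ⟩
    · have hlt : m0' < n0' := by omega
      exact ⟨m0' + 1, n0' + 1, by omega, by omega,
        key2full _ _ (hmodeq _ _ (fun i => congrFun hgeq'.symm i))⟩
  -- combine into quasi-periodicity
  set d := m1 - n1 with hd
  set e := m2 - n2 with he
  have hd1 : 1 ≤ d := by omega
  have he1 : 1 ≤ e := by omega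
  have hm1 : m1 = n1 + d := by omega
  have hm2 : m2 = n2 + e := by omega
  apply h
  set kc := Fintype.card F with hkc
  have hkc1 : 1 ≤ kc := Fintype.card_pos
  refine ⟨n1 + n2 + kc * e * d, n1 + n2, by omega,
    Nat.lt_add_of_pos_right (Nat.mul_pos (Nat.mul_pos hkc1 he1) hd1), ?_⟩
  funext x
  -- per-point argument
  set z := f^[n1] x - f^[m1] x with hz
  have hzW : z ∈ W := key1 x
  have hstep : ∀ (s : ℕ), ∀ v ∈ W, f^[n2 + s] v = f^[n2 + s + e] v := by
    intro s v hv
    rw [Function.iterate_add_apply f n2 s v, key2 _ (hWinv s v hv),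
      show n2 + s + e = m2 + s by omega, Function.iterate_add_apply f m2 s v]
  have hmul : ∀ (kk s : ℕ), f^[n2 + s] z = f^[n2 + s + e * kk] z := by
    intro kk
    induction kk with
    | zero => intro s; simp
    | succ kk ih =>
      intro s
      calc f^[n2 + s] z = f^[n2 + s + e * kk] z := ih s
        _ = f^[n2 + (s + e * kk)] z := by rw [Nat.add_assoc]
        _ = f^[n2 + (s + e * kk) + e] z := hstep (s + e * kk) z hzW
        _ = f^[n2 + s + e * (kk + 1)] z := by
              rw [show n2 + (s + e * kk) + e = n2 + s + e * (kk + 1) from by ring]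
  set u : ℕ → (Γ → F) := fun j => f^[n1 + n2 + j * d] x with hu
  have huv : ∀ j, u j - u (j + 1) = f^[n2 + j * d] z := by
    intro j
    have h1 : u j = f^[n2 + j * d] (f^[n1] x) := by
      show f^[n1 + n2 + j * d] x = f^[n2 + j * d] (f^[n1] x)
      rw [← Function.iterate_add_apply, show n2 + j * d + n1 = n1 + n2 + j * d from by ring]
    have h2 : u (j + 1) = f^[n2 + j * d] (f^[m1] x) := by
      show f^[n1 + n2 + (j + 1) * d] x = f^[n2 + j * d] (f^[m1] x)
      rw [← Function.iterate_add_apply,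
        show n2 + j * d + m1 = n1 + n2 + (j + 1) * d from by rw [hm1]; ring]
    rw [h1, h2, hz, hfL, iterate_linear_sub]
  have hvper : ∀ j, f^[n2 + (j + e) * d] z = f^[n2 + j * d] z := by
    intro j
    rw [show (j + e) * d = j * d + e * d by ring, ← Nat.add_assoc]
    exact (hmul d (j * d)).symm
  have hS : ∀ j, u j - u (j + e) = u 0 - u e := by
    intro j
    induction j with
    | zero => simp
    | succ j ih =>
      have e1 : u (j + 1) = u j - f^[n2 + j * d] z := by
        rw [← huv j]; abel
      have e2 : u (j + 1 + e) = u (j + e) - f^[n2 + j * d] z := by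
        have := huv (j + e)
        rw [hvper j] at this
        rw [show j + 1 + e = (j + e) + 1 by ring, ← this]; abel
      rw [e1, e2, ← ih]; abel
  have hmain : ∀ kk : ℕ, u 0 - u (kk * e) = kk • (u 0 - u e) := by
    intro kk
    induction kk with
    | zero => simp
    | succ kk ih =>
      have h1 := hS (kk * e)
      calc u 0 - u ((kk + 1) * e) = (u 0 - u (kk * e)) + (u (kk * e) - u (kk * e + e)) := by
            rw [show (kk + 1) * e = kk * e + e by ring]; abel
        _ = kk • (u 0 - u e) + (u 0 - u e) := by rw [ih, h1]
        _ = (kk + 1) • (u 0 - u e) := by rw [succ_nsmul]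
  have hzero : (kc : ℕ) • (u 0 - u e) = 0 := by
    rw [← Nat.cast_smul_eq_nsmul F, hkc, FiniteField.cast_card_eq_zero, zero_smul]
  have hfin := hmain kc
  rw [hzero, sub_eq_zero] at hfin
  have hfin2 : u (kc * e) = f^[n1 + n2 + kc * e * d] x := by
    show f^[n1 + n2 + kc * e * d] x = _
    rw [show n1 + n2 + kc * e * d = n1 + n2 + (kc * e) * d from by ring]
  have h00 : u 0 = f^[n1 + n2] x := by
    show f^[n1 + n2 + 0 * d] x = f^[n1 + n2] x
    rw [show n1 + n2 + 0 * d = n1 + n2 from by ring]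
  rw [← h00, hfin, hfin2]

end Hard

section Main

variable {A : Type*}

lemma orbit_eq_iterate {f : A → A} {a : ℕ → A} (ha : IsOrbit f a) :
    ∀ j, a j = f^[j] (a 0) := by
  intro j
  induction j with
  | zero => rfl
  | succ j ih => rw [← ha j, ih, Function.iterate_succ_apply']

lemma no_orbits_of_qp {f : A → A} {n m : ℕ} (hnm : n < m) (hiter : f^[n] = f^[m])
    (k : ℕ) (hk : 1 ≤ k) : ¬ HasDisjointOrbits f k := by
  rintro ⟨a, ha, -⟩
  obtain ⟨hio, hinj⟩ := ha ⟨0, hk⟩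
  have h1 : a ⟨0, hk⟩ n = a ⟨0, hk⟩ m := by
    rw [orbit_eq_iterate hio n, orbit_eq_iterate hio m, hiter]
  exact absurd (hinj h1) (by omega)

lemma entSet_eq_zero_iff' (f : A → A) :
    entSet f = 0 ↔ ∀ k : ℕ, 1 ≤ k → ¬ HasDisjointOrbits f k := by
  constructor
  · intro h k hk hdk
    have hmem : (k : ℕ∞) ∈ ({0} ∪ {m : ℕ∞ | ∃ k : ℕ, m = (k : ℕ∞) ∧ 1 ≤ k ∧
        HasDisjointOrbits f k}) := Or.inr ⟨k, rfl, hk, hdk⟩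
    have hle : (k : ℕ∞) ≤ entSet f := le_sSup hmem
    rw [h] at hle
    have : (k : ℕ∞) = 0 := le_antisymm hle (zero_le')
    rw [show ((0 : ℕ∞)) = ((0 : ℕ) : ℕ∞) from rfl] at this
    exact absurd (Nat.cast_injective this) (by omega)
  · intro hno
    show sSup _ = 0
    rw [show (0 : ℕ∞) = ⊥ from rfl, sSup_eq_bot]
    rintro a (ha | ⟨k, rfl, hk, hdk⟩)
    · simpa using ha
    · exact absurd hdk (hno k hk)

lemma entSet_eq_top_of_all (f : A → A) (hall : ∀ k : ℕ, HasDisjointOrbits f k) :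
    entSet f = ⊤ := by
  show sSup _ = ⊤
  rw [sSup_eq_top]
  intro b hb
  lift b to ℕ using hb.ne
  exact ⟨((b + 1 : ℕ) : ℕ∞), Or.inr ⟨b + 1, rfl, by omega, hall (b + 1)⟩,
    by exact_mod_cast Nat.lt_succ_self b⟩

end Main

theorem stmt_4 {F : Type*} [Field F] [Fintype F] {Γ : Type*} [Nonempty Γ]
    (φ : Γ → Γ) (w : Γ → F) :
    ((∃ m n : ℕ, 1 ≤ n ∧ n < m ∧ (wshift φ w)^[n] = (wshift φ w)^[m]) →
      entSet (wshift φ w) = 0) ∧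
    ((¬ ∃ m n : ℕ, 1 ≤ n ∧ n < m ∧ (wshift φ w)^[n] = (wshift φ w)^[m]) →
      entSet (wshift φ w) = ⊤) ∧
    (entSet (wshift φ w) = 0 ∨ entSet (wshift φ w) = ⊤) ∧
    (entSet (wshift φ w) = 0 ↔
      ∃ m n : ℕ, 1 ≤ n ∧ n < m ∧ (wshift φ w)^[n] = (wshift φ w)^[m]) := by
  have hzero : (∃ m n : ℕ, 1 ≤ n ∧ n < m ∧ (wshift φ w)^[n] = (wshift φ w)^[m]) →
      entSet (wshift φ w) = 0 := by
    rintro ⟨m, n, hn, hnm, hiter⟩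
    exact (entSet_eq_zero_iff' _).mpr (fun k hk => no_orbits_of_qp hnm hiter k hk)
  have htop : (¬ ∃ m n : ℕ, 1 ≤ n ∧ n < m ∧ (wshift φ w)^[n] = (wshift φ w)^[m]) →
      entSet (wshift φ w) = ⊤ := by
    intro hnqp
    obtain ⟨x, hx⟩ := exists_indep φ w hnqp
    exact entSet_eq_top_of_all _ (fun k => hasDisjointOrbits_of_indep (shiftL φ w) x hx k)
  refine ⟨hzero, htop, ?_, ?_⟩
  · by_cases hqp : ∃ m n : ℕ, 1 ≤ n ∧ n < m ∧ (wshift φ w)^[n] = (wshift φ w)^[m]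
    · exact Or.inl (hzero hqp)
    · exact Or.inr (htop hqp)
  · constructor
    · intro h0
      by_contra hqp
      rw [htop hqp] at h0
      exact absurd h0 (by simp)
    · exact hzero
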